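/- Substituting x_n = 0 in the coefficients of f(Z,t) yields: if n ∉ Z, the result is f(Z,t) (in n-1 variables); if n ∈ Z, the result is f(Z∖{n}, t+1). -/
import Mathlib


open scoped Classical
open Polynomial

/-- The `F_q`-span of `{v i : i ∈ Z}`, as a finite set. -/
noncomputable def spanFinset (Fq : Type*) [Field Fq] [Fintype Fq]
    {R : Type*} [CommRing R] [Algebra Fq R] {n : ℕ}
    (v : Fin n → R) (Z : Finset (Fin n)) : Finset R :=
  Finset.image (fun γ : Fin n → Fq => ∑ i ∈ Z, γ i • v i) Finset.univ

/-- `f(Z,t)(x) = ∏_{β ∈ span_{F_q}{v i : i ∈ Z}} (x - β)^{q^t}`. -/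
noncomputable def fLin (Fq : Type*) [Field Fq] [Fintype Fq]
    {R : Type*} [CommRing R] [Algebra Fq R] {n : ℕ} (q : ℕ)
    (v : Fin n → R) (Z : Finset (Fin n)) (t : ℕ) : Polynomial R :=
  ∏ β ∈ spanFinset Fq v Z, (X - C β) ^ q ^ t

/-- The substitution `x_n ↦ 0` (keeping the other variables), as a ring hom
`F_{q^s}[x_1,…,x_{n+1}] → F_{q^s}[x_1,…,x_n]`. -/
noncomputable def subLast (K : Type*) [CommSemiring K] (n : ℕ) :
    MvPolynomial (Fin (n + 1)) K →+* MvPolynomial (Fin n) K :=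
  (MvPolynomial.aeval (R := K) fun i : Fin (n + 1) =>
      if h : (i : ℕ) < n then MvPolynomial.X ⟨i, h⟩ else 0).toRingHom

section Aux
variable (Fq K : Type*) [Field Fq] [Fintype Fq] [Field K] [Algebra Fq K]

lemma mem_spanFinset {n : ℕ} (v : Fin n → MvPolynomial (Fin n) K) (Z : Finset (Fin n))
    (β : MvPolynomial (Fin n) K) :
    β ∈ spanFinset Fq v Z ↔ ∃ γ : Fin n → Fq, ∑ i ∈ Z, γ i • v i = β := by
  simp [spanFinset]

lemma coeff_span_sum {m : ℕ} (W : Finset (Fin m)) (γ : Fin m → Fq) (i : Fin m) :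
    MvPolynomial.coeff (Finsupp.single i 1)
      (∑ j ∈ W, γ j • (MvPolynomial.X j : MvPolynomial (Fin m) K)) =
      if i ∈ W then algebraMap Fq K (γ i) else 0 := by
  rw [MvPolynomial.coeff_sum]
  have h : ∀ j ∈ W,
      MvPolynomial.coeff (Finsupp.single i 1) (γ j • (MvPolynomial.X j : MvPolynomial (Fin m) K))
        = if j = i then algebraMap Fq K (γ j) else 0 := by
    intro j _
    rw [MvPolynomial.coeff_smul, MvPolynomial.coeff_X']
    by_cases h : j = i
    · subst h; simp [Algebra.algebraMap_eq_smul_one]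
    · simp [h, Finsupp.single_eq_single_iff]
  rw [Finset.sum_congr rfl h, Finset.sum_ite_eq' W i]

lemma span_eq_iff {m : ℕ} (W : Finset (Fin m)) (γ δ : Fin m → Fq)
    (h : ∑ j ∈ W, γ j • (MvPolynomial.X j : MvPolynomial (Fin m) K)
       = ∑ j ∈ W, δ j • MvPolynomial.X j) :
    ∀ i ∈ W, γ i = δ i := by
  intro i hi
  have h2 := congrArg (MvPolynomial.coeff (Finsupp.single i 1)) h
  rw [coeff_span_sum, coeff_span_sum, if_pos hi, if_pos hi] at h2
  exact (algebraMap Fq K).injective h2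

lemma subLast_X_last (n : ℕ) : subLast K n (MvPolynomial.X (Fin.last n)) = 0 := by
  simp [subLast]

lemma subLast_X_castSucc (n : ℕ) (i : Fin n) :
    subLast K n (MvPolynomial.X i.castSucc) = MvPolynomial.X i := by
  simp [subLast]

lemma subLast_smul (n : ℕ) (c : Fq) (p : MvPolynomial (Fin (n + 1)) K) :
    subLast K n (c • p) = c • subLast K n p := by
  simp only [subLast, AlgHom.toRingHom_eq_coe, RingHom.coe_coe]
  rw [← algebraMap_smul K c p, map_smul, algebraMap_smul]

lemma subLast_span (n : ℕ) (W : Finset (Fin (n + 1))) (γ : Fin (n + 1) → Fq) :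
    subLast K n (∑ i ∈ W, γ i • (MvPolynomial.X i : MvPolynomial (Fin (n + 1)) K)) =
      ∑ i ∈ Finset.univ.filter (fun i : Fin n => i.castSucc ∈ W),
        γ i.castSucc • MvPolynomial.X i := by
  rw [map_sum]
  have h1 : ∑ i ∈ W, subLast K n (γ i • (MvPolynomial.X i : MvPolynomial (Fin (n + 1)) K))
      = ∑ i : Fin (n + 1), if i ∈ W then subLast K n (γ i • MvPolynomial.X i) else 0 := by
    rw [Finset.sum_ite_mem, Finset.univ_inter]
  rw [h1, Fin.sum_univ_castSucc]
  have h2 : (if Fin.last n ∈ W then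
      subLast K n (γ (Fin.last n) • (MvPolynomial.X (Fin.last n) : MvPolynomial (Fin (n+1)) K)) else 0) = 0 := by
    rw [subLast_smul, subLast_X_last, smul_zero, ite_self]
  rw [h2, add_zero, Finset.sum_filter]
  refine Finset.sum_congr rfl fun i _ => ?_
  rw [subLast_smul, subLast_X_castSucc]

lemma image_subLast (n : ℕ) (W : Finset (Fin (n + 1))) :
    (spanFinset Fq (MvPolynomial.X (R := K)) W).image (subLast K n) =
      spanFinset Fq (MvPolynomial.X (R := K))
        (Finset.univ.filter fun i : Fin n => i.castSucc ∈ W) := by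
  ext β
  simp only [Finset.mem_image, mem_spanFinset]
  constructor
  · rintro ⟨b, ⟨γ, rfl⟩, rfl⟩
    exact ⟨fun i => γ i.castSucc, (subLast_span Fq K n W γ).symm⟩
  · rintro ⟨γ', rfl⟩
    refine ⟨∑ i ∈ W, (Fin.snoc γ' 0 : Fin (n+1) → Fq) i • MvPolynomial.X i,
      ⟨Fin.snoc γ' 0, rfl⟩, ?_⟩
    rw [subLast_span]
    exact Finset.sum_congr rfl fun i _ => by rw [Fin.snoc_castSucc]

lemma subLast_injOn (n : ℕ) (W : Finset (Fin (n + 1))) (hW : Fin.last n ∉ W) :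
    ∀ x ∈ spanFinset Fq (MvPolynomial.X (R := K)) W,
      ∀ y ∈ spanFinset Fq (MvPolynomial.X (R := K)) W,
        subLast K n x = subLast K n y → x = y := by
  intro x hx y hy hxy
  rw [mem_spanFinset] at hx hy
  obtain ⟨γ, rfl⟩ := hx
  obtain ⟨δ, rfl⟩ := hy
  rw [subLast_span, subLast_span] at hxy
  have h := span_eq_iff Fq K _ _ _ hxy
  refine Finset.sum_congr rfl fun i hi => ?_
  have hne : i ≠ Fin.last n := fun h' => hW (h' ▸ hi)
  have : γ ((i.castPred hne).castSucc) = δ ((i.castPred hne).castSucc) := by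
    apply h
    simp [Fin.castSucc_castPred, hi]
  rw [Fin.castSucc_castPred] at this
  rw [this]

lemma span_insert_last (n : ℕ) (Z : Finset (Fin (n + 1))) (hZ : Fin.last n ∈ Z) :
    spanFinset Fq (MvPolynomial.X (R := K)) Z =
      Finset.image
        (fun p : MvPolynomial (Fin (n + 1)) K × Fq =>
          p.1 + p.2 • MvPolynomial.X (Fin.last n))
        ((spanFinset Fq (MvPolynomial.X (R := K)) (Z.erase (Fin.last n))) ×ˢ Finset.univ) := by
  ext β
  simp only [Finset.mem_image, Finset.mem_product, Finset.mem_univ, and_true, mem_spanFinset,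
    Prod.exists]
  constructor
  · rintro ⟨γ, rfl⟩
    refine ⟨∑ i ∈ Z.erase (Fin.last n), γ i • MvPolynomial.X i, γ (Fin.last n),
      ⟨γ, rfl⟩, ?_⟩
    rw [← Finset.sum_erase_add Z _ hZ]
  · rintro ⟨σ, c, ⟨γ, rfl⟩, rfl⟩
    refine ⟨Function.update γ (Fin.last n) c, ?_⟩
    rw [← Finset.sum_erase_add Z _ hZ, Function.update_self]
    congr 1
    exact Finset.sum_congr rfl fun i hi => by
      rw [Function.update_of_ne (Finset.ne_of_mem_erase hi)]

lemma injOn_add_smul_last (n : ℕ) (Z : Finset (Fin (n + 1))) :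
    ∀ x ∈ (spanFinset Fq (MvPolynomial.X (R := K)) (Z.erase (Fin.last n))) ×ˢ
        (Finset.univ : Finset Fq),
      ∀ y ∈ (spanFinset Fq (MvPolynomial.X (R := K)) (Z.erase (Fin.last n))) ×ˢ
        (Finset.univ : Finset Fq),
        x.1 + x.2 • MvPolynomial.X (Fin.last n) = y.1 + y.2 • MvPolynomial.X (Fin.last n) →
          x = y := by
  have key : ∀ σ ∈ spanFinset Fq (MvPolynomial.X (R := K)) (Z.erase (Fin.last n)), ∀ c : Fq,
      MvPolynomial.coeff (Finsupp.single (Fin.last n) 1)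
        (σ + c • MvPolynomial.X (Fin.last n)) = algebraMap Fq K c := by
    intro σ hσ c
    rw [mem_spanFinset] at hσ
    obtain ⟨γ, rfl⟩ := hσ
    rw [MvPolynomial.coeff_add, coeff_span_sum,
      if_neg (Finset.notMem_erase _ _), MvPolynomial.coeff_smul, MvPolynomial.coeff_X',
      if_pos rfl, zero_add, Algebra.algebraMap_eq_smul_one]
  rintro ⟨σ₁, c₁⟩ h₁ ⟨σ₂, c₂⟩ h₂ h
  simp only [Finset.mem_product, Finset.mem_univ, and_true] at h₁ h₂
  have hc : c₁ = c₂ := by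
    apply (algebraMap Fq K).injective
    rw [← key σ₁ h₁ c₁, ← key σ₂ h₂ c₂, h]
  subst hc
  have hσ : σ₁ = σ₂ := by
    have := add_right_cancel h
    exact this
  rw [hσ]
end Aux

/-- Substituting `x_n = 0` in the coefficients of `f(Z,t)` gives `f(Z,t)` if
`n ∉ Z`, and `f(Z \ {n}, t+1)` if `n ∈ Z` (in one fewer variable). -/
theorem fLin_subst_last
    (Fq K : Type*) [Field Fq] [Fintype Fq] [Field K] [Algebra Fq K]
    (q : ℕ) (hq : Fintype.card Fq = q) (n : ℕ)
    (Z : Finset (Fin (n + 1))) (t : ℕ) :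
    (fLin Fq q (MvPolynomial.X (R := K)) Z t).map (subLast K n) =
      if Fin.last n ∈ Z then
        fLin Fq q (MvPolynomial.X (R := K))
          (Finset.univ.filter fun i : Fin n => i.castSucc ∈ Z) (t + 1)
      else
        fLin Fq q (MvPolynomial.X (R := K))
          (Finset.univ.filter fun i : Fin n => i.castSucc ∈ Z) t := by
  have hmap : (fLin Fq q (MvPolynomial.X (R := K)) Z t).map (subLast K n) =
      ∏ β ∈ spanFinset Fq (MvPolynomial.X (R := K)) Z,
        (X - C (subLast K n β)) ^ q ^ t := by
    rw [fLin, Polynomial.map_prod]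
    exact Finset.prod_congr rfl fun β _ => by
      rw [Polynomial.map_pow, Polynomial.map_sub, Polynomial.map_X, Polynomial.map_C]
  rw [hmap]
  by_cases hlast : Fin.last n ∈ Z
  · rw [if_pos hlast, span_insert_last Fq K n Z hlast,
      Finset.prod_image (injOn_add_smul_last Fq K n Z)]
    have h1 : ∀ p ∈ (spanFinset Fq (MvPolynomial.X (R := K)) (Z.erase (Fin.last n))) ×ˢ
        (Finset.univ : Finset Fq),
        (X - C (subLast K n (p.1 + p.2 • MvPolynomial.X (Fin.last n)))) ^ q ^ t
          = (X - C (subLast K n p.1)) ^ q ^ t := by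
      intro p _
      rw [map_add, subLast_smul, subLast_X_last, smul_zero, add_zero]
    rw [Finset.prod_congr rfl h1, Finset.prod_product]
    simp only [Finset.prod_const, Finset.card_univ, hq, ← pow_mul, ← pow_succ]
    have hset : (Finset.univ.filter fun i : Fin n => i.castSucc ∈ Z) =
        Finset.univ.filter fun i : Fin n => i.castSucc ∈ Z.erase (Fin.last n) := by
      apply Finset.filter_congr
      intro i _
      simp [Finset.mem_erase, (Fin.castSucc_lt_last i).ne]
    rw [fLin, hset, ← image_subLast Fq K n (Z.erase (Fin.last n)),
      Finset.prod_image
        (subLast_injOn Fq K n (Z.erase (Fin.last n)) (Finset.notMem_erase _ _))]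
  · rw [if_neg hlast, fLin, ← image_subLast Fq K n Z,
      Finset.prod_image (subLast_injOn Fq K n Z hlast)]
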